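/- Let ρ be an ordinal and U an ultrafilter on a set I with |I| < cf(ρ). Then the order type of the ultraproduct (∏ᵢ ρ)/U (which is a linear order; assume additionally U countably complete so that it is a well-order) has cofinality equal to cf(ρ). -/

import Mathlib

open Filter

universe u

section Aux

variable {I : Type u} (ρ : Ordinal.{u}) (U : Ultrafilter I)

/-- The diagonal embedding into the ultrapower. -/
noncomputable def diagEmb (β : {β : Ordinal.{u} // β < ρ}) :
    Filter.Germ (U : Filter I) {β : Ordinal.{u} // β < ρ} :=
  (↑β : Filter.Germ (U : Filter I) {β : Ordinal.{u} // β < ρ})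

theorem diagEmb_le_iff {β γ : {β : Ordinal.{u} // β < ρ}} :
    diagEmb ρ U β ≤ diagEmb ρ U γ ↔ β ≤ γ :=
  Filter.Germ.const_le_iff

/-- Every element of the ultrapower is bounded by a diagonal element. -/
theorem exists_diag_bound (hlt : Cardinal.mk I < ρ.cof)
    (g : Filter.Germ (U : Filter I) {β : Ordinal.{u} // β < ρ}) :
    ∃ β : {β : Ordinal.{u} // β < ρ}, g ≤ diagEmb ρ U β := by
  induction g using Filter.Germ.inductionOn with
  | h f =>
    have hb : (⨆ i, (f i).1) < ρ :=
      Ordinal.iSup_lt_of_lt_cof hlt fun i => (f i).2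
    refine ⟨⟨_, hb⟩, ?_⟩
    rw [diagEmb]
    exact Filter.Germ.coe_le.mpr (Filter.Eventually.of_forall fun i =>
      Subtype.coe_le_coe.mp (Ordinal.le_iSup (fun i => (f i).1) i))

end Aux

/-- If `|I| < cf ρ` and `U` is a countably complete ultrafilter on `I` (so that the
linearly ordered ultraproduct `(∏ᵢ ρ)/U` is a well-order), then the order type of the
ultraproduct has cofinality `cf ρ`. -/
theorem ultraproduct_cof_eq {I : Type u} (ρ : Ordinal.{u}) (U : Ultrafilter I)
    (hlt : Cardinal.mk I < ρ.cof)
    (hcc : ∀ s : ℕ → Set I, (∀ n, s n ∈ U) → (⋂ n, s n) ∈ U)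
    [inst : IsWellOrder (Filter.Germ (U : Filter I) {β : Ordinal.{u} // β < ρ})
      (· < ·)] :
    (Ordinal.type ((· < ·) :
        Filter.Germ (U : Filter I) {β : Ordinal.{u} // β < ρ} →
        Filter.Germ (U : Filter I) {β : Ordinal.{u} // β < ρ} → Prop)).cof =
      Cardinal.lift.{u + 1} ρ.cof := by
  have e : Set.Iio ρ ≃o ρ.ToType := Ordinal.ToType.mk
  have hc : (Ordinal.type ((· < ·) :
        Filter.Germ (U : Filter I) {β : Ordinal.{u} // β < ρ} →
        Filter.Germ (U : Filter I) {β : Ordinal.{u} // β < ρ} → Prop)).cof =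
      Order.cof (Filter.Germ (U : Filter I) {β : Ordinal.{u} // β < ρ}) :=
    Ordinal.cof_type _
  -- `¬ b < a → a ≤ b` in the ultrapower, from trichotomy
  have tri : ∀ a b : Filter.Germ (U : Filter I) {β : Ordinal.{u} // β < ρ},
      ¬ b < a → a ≤ b := by
    intro a b h
    rcases trichotomous_of (· < ·) a b with h' | h' | h'
    · exact le_of_lt h'
    · exact le_of_eq h'
    · exact absurd h' h
  apply le_antisymm
  · -- upper bound: image of an unbounded subset of ρ is unbounded in the ultrapower
    obtain ⟨S, hS, hScard⟩ := Order.exists_cof_eq ρ.ToType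
    rw [Ordinal.cof_toType] at hScard
    have hT : IsCofinal
        (Set.range (fun x : S => diagEmb ρ U (e.symm x.1))) := by
      intro g
      obtain ⟨β, hβ⟩ := exists_diag_bound ρ U hlt g
      obtain ⟨x, hxS, hx⟩ := hS (e β)
      refine ⟨_, ⟨⟨x, hxS⟩, rfl⟩, ?_⟩
      have h1 : β ≤ e.symm x := by
        exact e.le_symm_apply.mpr hx
      exact hβ.trans ((diagEmb_le_iff ρ U).mpr h1)
    calc (Ordinal.type _).cof ≤ _ := hc ▸ Order.cof_le hT
      _ ≤ Cardinal.lift.{u + 1} ρ.cof := by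
        have h := Cardinal.mk_range_le_lift (f := fun x : S => diagEmb ρ U (e.symm x.1))
        rwa [Cardinal.lift_id'.{u, u+1}, hScard] at h
  · -- lower bound
    rw [hc, Order.le_cof_iff]
    intro S hS
    -- for each g ∈ S choose a bound below ρ
    choose b hb using fun g : S => exists_diag_bound ρ U hlt g.1
    have hrange : IsCofinal (Set.range fun g : S => e (b g)) := by
      intro x
      obtain ⟨g, hgS, hg⟩ := hS (diagEmb ρ U (e.symm x))
      refine ⟨_, ⟨⟨g, hgS⟩, rfl⟩, ?_⟩
      have h1 : diagEmb ρ U (e.symm x) ≤ diagEmb ρ U (b ⟨g, hgS⟩) :=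
        hg.trans (hb ⟨g, hgS⟩)
      have h2 : e.symm x ≤ b ⟨g, hgS⟩ := (diagEmb_le_iff ρ U).mp h1
      have h3 : x ≤ e (b ⟨g, hgS⟩) := by simpa using e.monotone h2
      exact h3
    have hcof : ρ.cof ≤ Cardinal.mk (Set.range fun g : S => e (b g)) := by
      have := Order.cof_le hrange
      rwa [Ordinal.cof_toType] at this
    calc Cardinal.lift.{u + 1} ρ.cof
        ≤ Cardinal.lift.{u + 1} (Cardinal.mk (Set.range fun g : S => e (b g))) :=
          Cardinal.lift_le.mpr hcof
      _ ≤ Cardinal.mk S := by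
          have h := Cardinal.mk_range_le_lift (f := fun g : S => e (b g))
          rwa [Cardinal.lift_id'.{u, u+1}] at h
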